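/- arXiv:2304.08397 — 3 statements merged into one kernel-verified Lean document; each statement's English description precedes it below -/
import Mathlib

section
/- Suppose the graph Δ_t(n,k−1) is connected with diameter d. Then any two codes in C_t(n,k) \ I_t(n,k) are at distance at most d + 1 in the graph Λ_t(n,k). -/
open Finset

variable (F : Type) [Field F] [Fintype F] [DecidableEq F]

/-- The dual code of a linear code `C ⊆ F^n`, with respect to the standard bilinear form. -/
def dualCode (n : ℕ) (C : Submodule F (Fin n → F)) : Submodule F (Fin n → F) where
  carrier := {v | ∀ c ∈ C, ∑ i, v i * c i = 0}
  zero_mem' := by intro c _; simp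
  add_mem' := by
    intro a b ha hb c hc
    simp only [Set.mem_setOf_eq] at *
    simp [add_mul, Finset.sum_add_distrib, ha c hc, hb c hc]
  smul_mem' := by
    intro r a ha c hc
    simp only [Set.mem_setOf_eq] at *
    simp [smul_eq_mul, mul_assoc, ← Finset.mul_sum, ha c hc]

/-- `goodCode F n t k C` says that `C` is an `[n,k]`-linear code over `F` whose dual minimum
distance is at least `t+1`, i.e. `C ∈ C_t(n,k)`. -/
def goodCode (n t k : ℕ) (C : Submodule F (Fin n → F)) : Prop :=
  Module.finrank F C = k ∧ ∀ v ∈ dualCode F n C, v ≠ 0 → t + 1 ≤ hammingNorm v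

/-- The Grassmann graph `Δ_t(n,k)` of codes in `C_t(n,k)`: two codes are adjacent iff
their intersection has dimension `k-1`. -/
def deltaGraph (n t k : ℕ) : SimpleGraph {C : Submodule F (Fin n → F) // goodCode F n t k C} where
  Adj X Y := X ≠ Y ∧ Module.finrank F ↥(X.1 ⊓ Y.1) = k - 1
  symm := ⟨by
    rintro X Y ⟨h1, h2⟩
    exact ⟨h1.symm, by rwa [inf_comm]⟩⟩
  loopless := ⟨by rintro X ⟨h1, _⟩; exact h1 rfl⟩

/-- The graph `Λ_t(n,k)` of codes in `C_t(n,k)`: two codes are adjacent iff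
their intersection belongs to `C_t(n,k-1)`. -/
def lambdaGraph (n t k : ℕ) : SimpleGraph {C : Submodule F (Fin n → F) // goodCode F n t k C} where
  Adj X Y := X ≠ Y ∧ goodCode F n t (k-1) (X.1 ⊓ Y.1)
  symm := ⟨by
    rintro X Y ⟨h1, h2⟩
    exact ⟨h1.symm, by rwa [inf_comm]⟩⟩
  loopless := ⟨by rintro X ⟨h1, _⟩; exact h1 rfl⟩

/-- A code `C ∈ C_t(n,k)` is isolated if no `(k-1)`-dimensional subspace of `C`
belongs to `C_t(n,k-1)`. -/
def IsIsolated (n t k : ℕ) (C : Submodule F (Fin n → F)) : Prop :=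
  ∀ D : Submodule F (Fin n → F), D ≤ C → ¬ goodCode F n t (k-1) D

/-- A monomial transformation of `F^n`: a permutation of the coordinates composed with
multiplication of each coordinate by a nonzero scalar. -/
def IsMonomial (n : ℕ) (ρ : (Fin n → F) ≃ₗ[F] (Fin n → F)) : Prop :=
  ∃ (σ : Equiv.Perm (Fin n)) (d : Fin n → F),
    (∀ i, d i ≠ 0) ∧ ∀ (v : Fin n → F) (i : Fin n), ρ v i = d i * v (σ i)

/-- `S_s(Ω)`: the set of points (`1`-dimensional subspaces) of `PG(k-1,q)` lying on a subspace
spanned by `s+1` points of `Ω`. (We represent any subspace by the corresponding submodule of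
`F^k`, and points of `PG(k-1,q)` by `1`-dimensional submodules.) -/
def satPoints (k s : ℕ) (Ω : Set (Submodule F (Fin k → F))) : Set (Submodule F (Fin k → F)) :=
  {P | ∃ T : Finset (Submodule F (Fin k → F)), ↑T ⊆ Ω ∧ T.card = s + 1 ∧ P ≤ T.sup id}

/-- A set `Ω` of points of `PG(k-1,q)` is `s`-saturating if `S_s(Ω)` is the whole point set of
`PG(k-1,q)` while (for `s ≥ 1`) `S_{s-1}(Ω)` is not. -/
def IsSaturating (k s : ℕ) (Ω : Set (Submodule F (Fin k → F))) : Prop :=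
  (∀ P : Submodule F (Fin k → F), Module.finrank F P = 1 → P ∈ satPoints F k s Ω) ∧
  (1 ≤ s → ¬ ∀ P : Submodule F (Fin k → F), Module.finrank F P = 1 → P ∈ satPoints F k (s-1) Ω)

lemma dualCode_anti {n : ℕ} {A B : Submodule F (Fin n → F)} (h : A ≤ B) :
    dualCode F n B ≤ dualCode F n A := fun v hv c hc => hv c (h hc)

lemma adj_of_common {n k t : ℕ} (hk : 0 < k)
    {X W : {C : Submodule F (Fin n → F) // goodCode F n t k C}} (hne : X ≠ W)
    {Z : Submodule F (Fin n → F)} (hZ : goodCode F n t (k-1) Z)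
    (h1 : Z ≤ X.1) (h2 : Z ≤ W.1) : (lambdaGraph F n t k).Adj X W := by
  refine ⟨hne, ?_⟩
  have hle : Z ≤ X.1 ⊓ W.1 := le_inf h1 h2
  have hup : Module.finrank F ↥(X.1 ⊓ W.1) ≤ k := by
    have := Submodule.finrank_mono (inf_le_left : X.1 ⊓ W.1 ≤ X.1)
    rwa [X.2.1] at this
  have hlow : k - 1 ≤ Module.finrank F ↥(X.1 ⊓ W.1) := by
    have := Submodule.finrank_mono hle
    rwa [hZ.1] at this
  rcases eq_or_lt_of_le hup with heq | hlt
  · exfalso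
    have hXW : X.1 ⊓ W.1 = X.1 :=
      Submodule.eq_of_le_of_finrank_eq inf_le_left (by rw [heq, X.2.1])
    have : X.1 ≤ W.1 := hXW ▸ inf_le_right
    have : X.1 = W.1 := Submodule.eq_of_le_of_finrank_eq this (by rw [X.2.1, W.2.1])
    exact hne (Subtype.ext this)
  · have hfr : Module.finrank F ↥(X.1 ⊓ W.1) = k - 1 := by omega
    have : Z = X.1 ⊓ W.1 :=
      Submodule.eq_of_le_of_finrank_eq hle (by rw [hZ.1, hfr])
    exact this ▸ hZ

lemma good_sup {n k t : ℕ} (hk : 0 < k)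
    {Z₀ Z : {C : Submodule F (Fin n → F) // goodCode F n t (k-1) C}}
    (h : (deltaGraph F n t (k-1)).Adj Z₀ Z) :
    goodCode F n t k (Z₀.1 ⊔ Z.1) := by
  obtain ⟨hne, hinf⟩ := h
  have h2 : 2 ≤ k := by
    by_contra hlt
    have hk1 : k = 1 := by omega
    have hz0 : Z₀.1 = ⊥ :=
      (Submodule.finrank_eq_zero).mp (by rw [Z₀.2.1, hk1])
    have hz : Z.1 = ⊥ :=
      (Submodule.finrank_eq_zero).mp (by rw [Z.2.1, hk1])
    exact hne (Subtype.ext (hz0.trans hz.symm))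
  constructor
  · have hsum := Submodule.finrank_sup_add_finrank_inf_eq Z₀.1 Z.1
    rw [Z₀.2.1, Z.2.1, hinf] at hsum
    omega
  · intro v hv hvne
    exact Z₀.2.2 v (dualCode_anti F (le_sup_left : Z₀.1 ≤ Z₀.1 ⊔ Z.1) hv) hvne

lemma walk_extend {n k t : ℕ} (hk : 0 < k)
    {Z₀ Z₁ : {C : Submodule F (Fin n → F) // goodCode F n t (k-1) C}}
    (p : (deltaGraph F n t (k-1)).Walk Z₀ Z₁) :
    ∀ X : {C : Submodule F (Fin n → F) // goodCode F n t k C}, Z₀.1 ≤ X.1 →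
    ∃ X' : {C : Submodule F (Fin n → F) // goodCode F n t k C},
      Z₁.1 ≤ X'.1 ∧ ∃ w : (lambdaGraph F n t k).Walk X X', w.length ≤ p.length := by
  induction p with
  | nil => exact fun X hX => ⟨X, hX, SimpleGraph.Walk.nil, by simp⟩
  | @cons Z₀ Zm Z₁ h q ih =>
    intro X hX
    have hW : goodCode F n t k (Z₀.1 ⊔ Zm.1) := good_sup F hk h
    obtain ⟨X', hle, w, hw⟩ := ih ⟨Z₀.1 ⊔ Zm.1, hW⟩ le_sup_right
    by_cases hXW : X = (⟨Z₀.1 ⊔ Zm.1, hW⟩ : {C : Submodule F (Fin n → F) // goodCode F n t k C})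
    · subst hXW
      exact ⟨X', hle, w, by simpa using Nat.le_succ_of_le hw⟩
    · have hadj : (lambdaGraph F n t k).Adj X ⟨Z₀.1 ⊔ Zm.1, hW⟩ :=
        adj_of_common F hk hXW Z₀.2 hX le_sup_left
      exact ⟨X', hle, SimpleGraph.Walk.cons hadj w, by simpa using Nat.succ_le_succ hw⟩

/-- If `Δ_t(n,k-1)` is connected with diameter `d`, then any two non-isolated
codes of `C_t(n,k)` are at distance at most `d + 1` in `Λ_t(n,k)`. -/
theorem lambda_dist_le_delta_diam_succ
    {n k t : ℕ} (hk : 0 < k) (hkn : k < n) (ht : t ≤ k) (d : ℕ)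
    (hconn : (deltaGraph F n t (k-1)).Preconnected)
    (hdiam : (deltaGraph F n t (k-1)).diam = d) :
    ∀ X Y : {C : Submodule F (Fin n → F) // goodCode F n t k C},
      ¬ IsIsolated F n t k X.1 → ¬ IsIsolated F n t k Y.1 →
      (lambdaGraph F n t k).dist X Y ≤ d + 1 := by
  intro X Y hX hY
  simp only [IsIsolated, not_forall, not_not] at hX hY
  obtain ⟨DX, hDXle, hDXg⟩ := hX
  obtain ⟨DY, hDYle, hDYg⟩ := hY
  set A : {C : Submodule F (Fin n → F) // goodCode F n t (k-1) C} := ⟨DX, hDXg⟩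
  set B : {C : Submodule F (Fin n → F) // goodCode F n t (k-1) C} := ⟨DY, hDYg⟩
  haveI : Finite (Submodule F (Fin n → F)) :=
    Finite.of_injective (fun S : Submodule F (Fin n → F) => (S : Set (Fin n → F)))
      SetLike.coe_injective
  haveI : Nonempty {C : Submodule F (Fin n → F) // goodCode F n t (k-1) C} := ⟨A⟩
  have hetop : (deltaGraph F n t (k-1)).ediam ≠ ⊤ := by
    obtain ⟨u, v, huv⟩ := SimpleGraph.exists_edist_eq_ediam_of_finite
      (G := deltaGraph F n t (k-1))
    rw [← huv]
    exact (SimpleGraph.edist_ne_top_iff_reachable).mpr (hconn u v)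
  have hdist : (deltaGraph F n t (k-1)).dist A B ≤ d :=
    hdiam ▸ SimpleGraph.dist_le_diam hetop
  obtain ⟨p, hp⟩ := (hconn A B).exists_walk_length_eq_dist
  obtain ⟨X', hle, w, hw⟩ := walk_extend F hk p X hDXle
  have hXY : (lambdaGraph F n t k).dist X Y ≤ w.length + 1 := by
    by_cases hXE : X' = Y
    · subst hXE
      exact le_trans (SimpleGraph.dist_le w) (Nat.le_succ _)
    · have hadj : (lambdaGraph F n t k).Adj X' Y :=
        adj_of_common F hk hXE hDYg hle hDYle
      have := SimpleGraph.dist_le (w.append (SimpleGraph.Walk.cons hadj SimpleGraph.Walk.nil))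
      simpa [SimpleGraph.Walk.length_append] using this
  calc (lambdaGraph F n t k).dist X Y ≤ w.length + 1 := hXY
    _ ≤ p.length + 1 := Nat.succ_le_succ hw
    _ ≤ d + 1 := Nat.succ_le_succ (hp ▸ hdist)
end

section
/- The subgraph Λ̃_1(n,k) of Λ_1(n,k) induced on the non-isolated codes C_1(n,k) \ I_1(n,k) is connected, and its diameter is at most k+1; that is, any two non-isolated codes of C_1(n,k) are joined in Λ_1(n,k) by a path of length at most k+1. -/
set_option linter.unusedSectionVars false


open Finset

variable (F : Type) [Field F] [Fintype F] [DecidableEq F]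

-- Auxiliary development

/-- The all-ones vector. -/
def uvec (n : ℕ) : Fin n → F := fun _ => 1

lemma uvec_ne_zero {n : ℕ} (hn : 0 < n) : uvec F n ≠ 0 := by
  intro h
  have := congrFun h ⟨0, hn⟩
  simp [uvec] at this

/-- A code containing the all-ones vector has dual minimum distance ≥ 2. -/
lemma goodCode_of_uvec {n m : ℕ} (C : Submodule F (Fin n → F))
    (hC : Module.finrank F ↥C = m) (hu : uvec F n ∈ C) :
    goodCode F n 1 m C := by
  refine ⟨hC, fun v hv hv0 => ?_⟩
  obtain ⟨j, hj⟩ : ∃ j, v j ≠ 0 := by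
    by_contra h; push_neg at h; exact hv0 (funext h)
  by_contra hlt
  push_neg at hlt
  have hvi : ∀ i, i ≠ j → v i = 0 := by
    intro i hij
    by_contra hvine
    have hsub : ({i, j} : Finset (Fin n)) ⊆ Finset.univ.filter (fun t => v t ≠ 0) := by
      intro t ht
      simp only [Finset.mem_insert, Finset.mem_singleton] at ht
      rcases ht with rfl | rfl <;> simp [hvine, hj]
    have h2 : 2 ≤ hammingNorm v := by
      calc 2 = ({i, j} : Finset (Fin n)).card := by
              rw [Finset.card_insert_of_notMem (by simp [hij]), Finset.card_singleton]
        _ ≤ _ := Finset.card_le_card hsub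
    omega
  have hsum := hv (uvec F n) hu
  rw [Finset.sum_eq_single j (fun i _ hij => by rw [hvi i hij, zero_mul]) (by simp)] at hsum
  simp only [uvec, mul_one] at hsum
  exact hj hsum

/-- Existence of an intermediate subspace of any admissible dimension. -/
lemma subspaceBetween {n : ℕ} (m : ℕ) :
    ∀ (S Z : Submodule F (Fin n → F)), S ≤ Z →
      Module.finrank F ↥S + m ≤ Module.finrank F ↥Z →
      ∃ H : Submodule F (Fin n → F), S ≤ H ∧ H ≤ Z ∧
        Module.finrank F ↥H = Module.finrank F ↥S + m := by
  induction m with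
  | zero => intro S Z hSZ _; exact ⟨S, le_rfl, hSZ, by simp⟩
  | succ m ih =>
    intro S Z hSZ hdim
    obtain ⟨z, hzZ, hzS⟩ : ∃ z ∈ Z, z ∉ S := by
      by_contra h
      push_neg at h
      have : Z ≤ S := h
      have := Submodule.finrank_mono this
      omega
    have hz0 : z ≠ 0 := fun h => hzS (h ▸ S.zero_mem)
    have hdisj : S ⊓ (F ∙ z) = ⊥ :=
      disjoint_iff.mp ((Submodule.disjoint_span_singleton' hz0).mpr hzS)
    have hrk : Module.finrank F ↥(S ⊔ (F ∙ z)) = Module.finrank F ↥S + 1 := by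
      have := Submodule.finrank_sup_add_finrank_inf_eq S (F ∙ z)
      rw [hdisj, finrank_bot, finrank_span_singleton hz0] at this
      omega
    have hle : S ⊔ (F ∙ z) ≤ Z :=
      sup_le hSZ ((Submodule.span_singleton_le_iff_mem z Z).mpr hzZ)
    obtain ⟨H, h1, h2, h3⟩ := ih (S ⊔ (F ∙ z)) Z hle (by omega)
    exact ⟨H, le_trans le_sup_left h1, h2, by omega⟩

/-- The set of non-isolated codes. -/
def NIset (n k : ℕ) : Set {C : Submodule F (Fin n → F) // goodCode F n 1 k C} :=
  {X | ¬ IsIsolated F n 1 k X.1}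

lemma extendCode {n k : ℕ} (hn : 0 < n) (hk : 1 < k)
    (X D : Submodule F (Fin n → F)) (w : Fin n → F)
    (hDX : D ≤ X) (hD : goodCode F n 1 (k-1) D)
    (hwX : w ∉ X) (hu : uvec F n ∈ D ⊔ (F ∙ w)) :
    goodCode F n 1 k (D ⊔ (F ∙ w)) ∧ ¬ IsIsolated F n 1 k (D ⊔ (F ∙ w)) ∧
    X ⊓ (D ⊔ (F ∙ w)) = D ∧ X ≠ D ⊔ (F ∙ w) := by
  have hwD : w ∉ D := fun h => hwX (hDX h)
  have hw0 : w ≠ 0 := fun h => hwD (h ▸ D.zero_mem)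
  have hdisj : D ⊓ (F ∙ w) = ⊥ :=
    disjoint_iff.mp ((Submodule.disjoint_span_singleton' hw0).mpr hwD)
  have hfrZ : Module.finrank F ↥(D ⊔ (F ∙ w)) = k := by
    have h1 := Submodule.finrank_sup_add_finrank_inf_eq D (F ∙ w)
    rw [hdisj, finrank_bot, finrank_span_singleton hw0, hD.1] at h1
    omega
  have hgood : goodCode F n 1 k (D ⊔ (F ∙ w)) := goodCode_of_uvec F _ hfrZ hu
  have hinf : X ⊓ (D ⊔ (F ∙ w)) = D := by
    refine le_antisymm ?_ (le_inf hDX le_sup_left)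
    rintro x ⟨hx1, hx2⟩
    obtain ⟨d, hd, y, hy, rfl⟩ := Submodule.mem_sup.mp hx2
    obtain ⟨a, rfl⟩ := Submodule.mem_span_singleton.mp hy
    rcases eq_or_ne a 0 with rfl | ha
    · simpa using hd
    · exfalso
      have : a • w ∈ X := by
        have := X.sub_mem hx1 (hDX hd)
        simpa using this
      have : w ∈ X := by
        have h2 := X.smul_mem a⁻¹ this
        rwa [smul_smul, inv_mul_cancel₀ ha, one_smul] at h2
      exact hwX this
  have hXne : X ≠ D ⊔ (F ∙ w) := by
    intro h
    exact hwX (h ▸ Submodule.mem_sup_right (Submodule.mem_span_singleton_self w))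
  refine ⟨hgood, ?_, hinf, hXne⟩
  -- non-isolated: find a good hyperplane through uvec
  obtain ⟨H, hH1, hH2, hH3⟩ := subspaceBetween F (k - 2) (F ∙ uvec F n) (D ⊔ (F ∙ w))
    ((Submodule.span_singleton_le_iff_mem _ _).mpr hu)
    (by rw [finrank_span_singleton (uvec_ne_zero F hn), hfrZ]; omega)
  have hfrH : Module.finrank F ↥H = k - 1 := by
    rw [hH3, finrank_span_singleton (uvec_ne_zero F hn)]; omega
  have hgoodH : goodCode F n 1 (k-1) H :=
    goodCode_of_uvec F _ hfrH (hH1 (Submodule.mem_span_singleton_self _))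
  exact fun hiso => hiso H hH2 hgoodH

lemma startWalk {n k : ℕ} (hn : 0 < n) (hk : 1 < k) (X : ↥(NIset F n k)) :
    ∃ Z : ↥(NIset F n k), uvec F n ∈ Z.1.1 ∧
      ∃ p : ((lambdaGraph F n 1 k).induce (NIset F n k)).Walk X Z, p.length ≤ 1 := by
  by_cases hu : uvec F n ∈ X.1.1
  · exact ⟨X, hu, SimpleGraph.Walk.nil, by simp⟩
  · obtain ⟨D, hDX, hD⟩ : ∃ D, D ≤ X.1.1 ∧ goodCode F n 1 (k-1) D := by
      have h2 := X.2
      unfold NIset IsIsolated at h2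
      push_neg at h2
      exact h2
    obtain ⟨hgood, hni, hinf, hXne⟩ := extendCode F hn hk X.1.1 D (uvec F n) hDX hD hu
      (Submodule.mem_sup_right (Submodule.mem_span_singleton_self _))
    refine ⟨⟨⟨D ⊔ (F ∙ uvec F n), hgood⟩, hni⟩,
      Submodule.mem_sup_right (Submodule.mem_span_singleton_self _), ?_⟩
    have hadj : ((lambdaGraph F n 1 k).induce (NIset F n k)).Adj X ⟨⟨D ⊔ (F ∙ uvec F n), hgood⟩, hni⟩ := by
      show (lambdaGraph F n 1 k).Adj X.1 ⟨D ⊔ (F ∙ uvec F n), hgood⟩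
      refine ⟨fun h => hXne (congrArg Subtype.val h), ?_⟩
      show goodCode F n 1 (k-1) (X.1.1 ⊓ (D ⊔ (F ∙ uvec F n)))
      rw [hinf]; exact hD
    exact ⟨SimpleGraph.Walk.cons hadj SimpleGraph.Walk.nil, by simp⟩

lemma midWalk {n k : ℕ} (hn : 0 < n) (hk : 1 < k) :
    ∀ (d : ℕ) (Z W : ↥(NIset F n k)),
      uvec F n ∈ Z.1.1 → uvec F n ∈ W.1.1 →
      k ≤ Module.finrank F ↥(Z.1.1 ⊓ W.1.1) + d →
      ∃ p : ((lambdaGraph F n 1 k).induce (NIset F n k)).Walk Z W, p.length ≤ d := by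
  intro d
  induction d with
  | zero =>
    intro Z W _ _ hd
    have h1 : Z.1.1 ⊓ W.1.1 = Z.1.1 :=
      Submodule.eq_of_le_of_finrank_le inf_le_left (by rw [Z.1.2.1]; simpa using hd)
    have hZW : Z.1.1 ≤ W.1.1 := h1 ▸ inf_le_right
    have h2 : Z.1.1 = W.1.1 :=
      Submodule.eq_of_le_of_finrank_le hZW (by rw [Z.1.2.1, W.1.2.1])
    have h3 : Z = W := Subtype.ext (Subtype.ext h2)
    subst h3
    exact ⟨SimpleGraph.Walk.nil, by simp⟩
  | succ d ih =>
    intro Z W huZ huW hd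
    by_cases hZW : Z = W
    · subst hZW; exact ⟨SimpleGraph.Walk.nil, by simp⟩
    have hne : Z.1.1 ≠ W.1.1 := fun h => hZW (Subtype.ext (Subtype.ext h))
    obtain ⟨w, hwW, hwZ⟩ : ∃ w ∈ W.1.1, w ∉ Z.1.1 := by
      by_contra h
      push_neg at h
      exact hne (Submodule.eq_of_le_of_finrank_le h (by rw [Z.1.2.1, W.1.2.1])).symm
    have hw0 : w ≠ 0 := fun h => hwZ (h ▸ Z.1.1.zero_mem)
    have hfrS : Module.finrank F ↥(Z.1.1 ⊓ W.1.1) + 1 ≤ k := by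
      have h2 := Submodule.finrank_mono (inf_le_left : Z.1.1 ⊓ W.1.1 ≤ Z.1.1)
      rw [Z.1.2.1] at h2
      rcases eq_or_lt_of_le h2 with heq | hlt
      · exfalso
        have h3 : Z.1.1 ⊓ W.1.1 = Z.1.1 :=
          Submodule.eq_of_le_of_finrank_le inf_le_left (by rw [Z.1.2.1]; omega)
        have hZW' : Z.1.1 ≤ W.1.1 := h3 ▸ inf_le_right
        exact hne (Submodule.eq_of_le_of_finrank_le hZW' (by rw [Z.1.2.1, W.1.2.1]))
      · omega
    obtain ⟨H, hSH, hHZ, hH3⟩ := subspaceBetween F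
      (k - 1 - Module.finrank F ↥(Z.1.1 ⊓ W.1.1))
      (Z.1.1 ⊓ W.1.1) Z.1.1 inf_le_left (by rw [Z.1.2.1]; omega)
    have hfrH : Module.finrank F ↥H = k - 1 := by rw [hH3]; omega
    have huH : uvec F n ∈ H := hSH (Submodule.mem_inf.mpr ⟨huZ, huW⟩)
    have hgoodH : goodCode F n 1 (k-1) H := goodCode_of_uvec F _ hfrH huH
    obtain ⟨hgood, hni, hinf, hZne⟩ := extendCode F hn hk Z.1.1 H w hHZ hgoodH hwZ
      (Submodule.mem_sup_left huH)
    set Z' : ↥(NIset F n k) := ⟨⟨H ⊔ (F ∙ w), hgood⟩, hni⟩ with hZ'def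
    have hadj : ((lambdaGraph F n 1 k).induce (NIset F n k)).Adj Z Z' := by
      show (lambdaGraph F n 1 k).Adj Z.1 Z'.1
      refine ⟨fun h => hZne (congrArg Subtype.val h), ?_⟩
      show goodCode F n 1 (k-1) (Z.1.1 ⊓ (H ⊔ (F ∙ w)))
      rw [hinf]; exact hgoodH
    have hwS : w ∉ Z.1.1 ⊓ W.1.1 := fun h => hwZ (Submodule.mem_inf.mp h).1
    have hsub : (Z.1.1 ⊓ W.1.1) ⊔ (F ∙ w) ≤ (H ⊔ (F ∙ w)) ⊓ W.1.1 :=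
      sup_le (le_inf (le_trans hSH le_sup_left) inf_le_right)
        (le_inf le_sup_right ((Submodule.span_singleton_le_iff_mem _ _).mpr hwW))
    have hfrsup : Module.finrank F ↥((Z.1.1 ⊓ W.1.1) ⊔ (F ∙ w)) =
        Module.finrank F ↥(Z.1.1 ⊓ W.1.1) + 1 := by
      have hdisj : (Z.1.1 ⊓ W.1.1) ⊓ (F ∙ w) = ⊥ :=
        disjoint_iff.mp ((Submodule.disjoint_span_singleton' hw0).mpr hwS)
      have h1 := Submodule.finrank_sup_add_finrank_inf_eq (Z.1.1 ⊓ W.1.1) (F ∙ w)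
      rw [hdisj, finrank_bot, finrank_span_singleton hw0] at h1
      omega
    have hmono := Submodule.finrank_mono hsub
    obtain ⟨p, hp⟩ := ih Z' W (Submodule.mem_sup_left huH) huW (by
      show k ≤ Module.finrank F ↥((H ⊔ (F ∙ w)) ⊓ W.1.1) + d
      omega)
    exact ⟨SimpleGraph.Walk.cons hadj p, by
      rw [SimpleGraph.Walk.length_cons]; omega⟩

/-- The induced subgraph `Λ̃_1(n,k)` on the non-isolated codes of `C_1(n,k)`
is connected, and any two non-isolated codes are joined in `Λ_1(n,k)` by a path of length
at most `k+1`. -/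
theorem lambdaTilde_one_connected_diam_le
    {n k : ℕ} (hk : 1 < k) (hkn : k < n) :
    ((lambdaGraph F n 1 k).induce
        {X : {C : Submodule F (Fin n → F) // goodCode F n 1 k C} |
          ¬ IsIsolated F n 1 k X.1}).Preconnected ∧
    ∀ X Y : {C : Submodule F (Fin n → F) // goodCode F n 1 k C},
      ¬ IsIsolated F n 1 k X.1 → ¬ IsIsolated F n 1 k Y.1 →
      (lambdaGraph F n 1 k).Reachable X Y ∧ (lambdaGraph F n 1 k).dist X Y ≤ k + 1 := by
  have hn : 0 < n := by omega
  have main : ∀ X Y : ↥(NIset F n k),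
      ∃ p : ((lambdaGraph F n 1 k).induce (NIset F n k)).Walk X Y, p.length ≤ k + 1 := by
    intro X Y
    obtain ⟨ZX, huX, pX, hpX⟩ := startWalk F hn hk X
    obtain ⟨ZY, huY, pY, hpY⟩ := startWalk F hn hk Y
    have hfr : 1 ≤ Module.finrank F ↥(ZX.1.1 ⊓ ZY.1.1) := by
      have h1 : (F ∙ uvec F n) ≤ ZX.1.1 ⊓ ZY.1.1 :=
        (Submodule.span_singleton_le_iff_mem _ _).mpr (Submodule.mem_inf.mpr ⟨huX, huY⟩)
      have h2 := Submodule.finrank_mono h1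
      rwa [finrank_span_singleton (uvec_ne_zero F hn)] at h2
    obtain ⟨pm, hpm⟩ := midWalk F hn hk (k-1) ZX ZY huX huY (by omega)
    refine ⟨pX.append (pm.append pY.reverse), ?_⟩
    rw [SimpleGraph.Walk.length_append, SimpleGraph.Walk.length_append,
      SimpleGraph.Walk.length_reverse]
    omega
  constructor
  · intro X Y
    obtain ⟨p, _⟩ := main X Y
    exact ⟨p⟩
  · intro X Y hX hY
    obtain ⟨p, hp⟩ := main ⟨X, hX⟩ ⟨Y, hY⟩
    let f : ((lambdaGraph F n 1 k).induce (NIset F n k)) →g lambdaGraph F n 1 k :=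
      ⟨Subtype.val, fun {a b} h => h⟩
    constructor
    · exact ⟨p.map f⟩
    · calc (lambdaGraph F n 1 k).dist X Y ≤ (p.map f).length := SimpleGraph.dist_le (p.map f)
        _ = p.length := SimpleGraph.Walk.length_map f p
        _ ≤ k + 1 := hp
end

section
/- If q > binomial(n,t) and t < k, then the graph Λ_t(n,k) is connected. -/
open Finset

variable (F : Type) [Field F] [Fintype F] [DecidableEq F]

set_option linter.unusedSectionVars false
set_option linter.unusedVariables false

namespace LambdaAux

open Module Submodule Matrix

variable {F : Type} [Field F] [Fintype F] [DecidableEq F] {n t k : ℕ}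

/-- The pairing `y ↦ ∑ i, v i * y i` as a linear map. -/
def dotL (v : Fin n → F) : (Fin n → F) →ₗ[F] F where
  toFun y := ∑ i, v i * y i
  map_add' a b := by simp [mul_add, Finset.sum_add_distrib]
  map_smul' c a := by
    simp only [Pi.smul_apply, smul_eq_mul, RingHom.id_apply, Finset.mul_sum]
    exact Finset.sum_congr rfl fun i _ => by ring

@[simp] lemma dotL_apply (v y : Fin n → F) : dotL v y = ∑ i, v i * y i := rfl

lemma mem_dualCode {C : Submodule F (Fin n → F)} {v : Fin n → F} :
    v ∈ dualCode F n C ↔ ∀ c ∈ C, ∑ i, v i * c i = 0 := Iff.rfl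

lemma dualCode_antitone {C C' : Submodule F (Fin n → F)} (h : C ≤ C') :
    dualCode F n C' ≤ dualCode F n C := fun v hv c hc => hv c (h hc)

lemma good_up {j j' : ℕ} {D E : Submodule F (Fin n → F)} (hD : goodCode F n t j D)
    (hDE : D ≤ E) (hE : Module.finrank F E = j') : goodCode F n t j' E :=
  ⟨hE, fun v hv hv0 => hD.2 v (dualCode_antitone hDE hv) hv0⟩

lemma span_basis_eq {ι : Type} (C : Submodule F (Fin n → F)) (b : Basis ι F C) :
    Submodule.span F (Set.range fun j => (b j : Fin n → F)) = C := by
  have h : (Set.range fun j => (b j : Fin n → F)) = C.subtype '' (Set.range b) := by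
    rw [← Set.range_comp]; rfl
  rw [h, ← Submodule.map_span, b.span_eq, Submodule.map_subtype_top]

lemma mem_dualCode_iff_basis {ι : Type} {C : Submodule F (Fin n → F)} (b : Basis ι F C)
    {v : Fin n → F} :
    v ∈ dualCode F n C ↔ ∀ j, ∑ i, v i * (b j : Fin n → F) i = 0 := by
  constructor
  · intro hv j; exact hv _ (b j).2
  · intro h c hc
    have hle : C ≤ LinearMap.ker (dotL v) := by
      rw [← span_basis_eq C b, Submodule.span_le]
      rintro x ⟨j, rfl⟩
      exact h j
    exact hle hc

lemma finrank_dualCode_add (C : Submodule F (Fin n → F)) :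
    Module.finrank F (dualCode F n C) + Module.finrank F C = n := by
  classical
  set m := Module.finrank F C with hm
  let b : Basis (Fin m) F C := Module.finBasis F C
  let A : Matrix (Fin m) (Fin n) F := Matrix.of fun j i => (b j : Fin n → F) i
  have hker : LinearMap.ker A.mulVecLin = dualCode F n C := by
    ext v
    rw [LinearMap.mem_ker, mem_dualCode_iff_basis b]
    constructor
    · intro h j
      have := congrFun h j
      simp only [Matrix.mulVecLin_apply, Matrix.mulVec, dotProduct, Pi.zero_apply] at this
      rw [← this]
      exact Finset.sum_congr rfl fun i _ => mul_comm _ _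
    · intro h
      funext j
      have := h j
      simp only [Matrix.mulVecLin_apply, Matrix.mulVec, dotProduct, Pi.zero_apply]
      rw [← this]
      exact Finset.sum_congr rfl fun i _ => mul_comm _ _
  have hinj : Function.Injective Aᵀ.mulVecLin := by
    rw [← LinearMap.ker_eq_bot, LinearMap.ker_eq_bot']
    intro u hu
    have h0 : ∑ j, u j • (b j : Fin n → F) = 0 := by
      funext i
      have := congrFun hu i
      simp only [Matrix.mulVecLin_apply, Matrix.mulVec, dotProduct,
        Matrix.transpose_apply, Pi.zero_apply] at this
      simp only [Finset.sum_apply, Pi.smul_apply, smul_eq_mul, Pi.zero_apply]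
      rw [← this]
      exact Finset.sum_congr rfl fun j _ => mul_comm _ _
    have h1 : (∑ j, u j • b j : C) = 0 := by
      apply Subtype.ext
      push_cast [Submodule.coe_sum]
      exact h0
    have := Fintype.linearIndependent_iff.mp b.linearIndependent u h1
    funext j; exact this j
  have hr : Module.finrank F (LinearMap.range A.mulVecLin) = m := by
    have h1 : Aᵀ.rank = m := by
      have : Aᵀ.rank = Module.finrank F (LinearMap.range Aᵀ.mulVecLin) := rfl
      rw [this, LinearMap.finrank_range_of_inj hinj, finrank_pi]
      simp
    have h2 := Matrix.rank_transpose A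
    have h3 : A.rank = Module.finrank F (LinearMap.range A.mulVecLin) := rfl
    rw [h1, h3] at h2
    omega
  have h3 := LinearMap.finrank_range_add_finrank_ker A.mulVecLin
  rw [hr, hker, finrank_pi, Fintype.card_fin] at h3
  omega

lemma exists_avoid (V : Submodule F (Fin n → F)) (hV : V ≠ ⊥)
    (𝒞 : Finset (Submodule F (Fin n → F)))
    (hP : ∀ P ∈ 𝒞, ¬ V ≤ P) (hcard : 𝒞.card ≤ Fintype.card F) :
    ∃ y, y ∈ V ∧ y ≠ 0 ∧ ∀ P ∈ 𝒞, y ∉ P := by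
  classical
  set q := Fintype.card F with hq
  have hq1 : 1 < q := Fintype.one_lt_card
  set d := Module.finrank F V with hd
  have hd1 : 1 ≤ d := by
    by_contra h
    push_neg at h
    exact hV (Submodule.finrank_eq_zero.mp (by omega))
  have hcardW : ∀ (W : Submodule F (Fin n → F)),
      ((W : Set (Fin n → F)).toFinset).card = q ^ Module.finrank F W := by
    intro W
    rw [Set.toFinset_card,
      Fintype.card_congr (Equiv.subtypeEquivRight (fun x => Iff.rfl : ∀ x, x ∈ (W : Set (Fin n → F)) ↔ x ∈ W))]
    exact card_eq_pow_finrank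
  set bigA : Finset (Fin n → F) := (V : Set (Fin n → F)).toFinset.erase 0 with hbigAdef
  have hbigA : bigA.card = q ^ d - 1 := by
    rw [Finset.card_erase_of_mem (by simp [Set.mem_toFinset]), hcardW V]
  set bad : Finset (Fin n → F) :=
    𝒞.biUnion (fun P => ((V ⊓ P : Submodule F (Fin n → F)) : Set (Fin n → F)).toFinset.erase 0)
    with hbaddef
  have hbadcard : bad.card ≤ 𝒞.card * (q ^ (d-1) - 1) := by
    refine (Finset.card_biUnion_le).trans ?_
    have hone : ∀ P ∈ 𝒞,
        (((V ⊓ P : Submodule F (Fin n → F)) : Set (Fin n → F)).toFinset.erase 0).card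
          ≤ q ^ (d-1) - 1 := by
      intro P hPm
      have hlt : V ⊓ P < V := by
        refine lt_of_le_of_ne inf_le_left (fun h => hP P hPm ?_)
        exact (inf_eq_left.mp h)
      have he : Module.finrank F (V ⊓ P : Submodule F (Fin n → F)) < d :=
        Submodule.finrank_lt_finrank_of_lt hlt
      rw [Finset.card_erase_of_mem (by simp [Set.mem_toFinset]), hcardW]
      have : q ^ Module.finrank F (V ⊓ P : Submodule F (Fin n → F)) ≤ q ^ (d-1) :=
        Nat.pow_le_pow_right (by omega) (by omega)
      omega
    calc ∑ P ∈ 𝒞, (((V ⊓ P : Submodule F (Fin n → F)) : Set (Fin n → F)).toFinset.erase 0).card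
        ≤ ∑ _P ∈ 𝒞, (q ^ (d-1) - 1) := Finset.sum_le_sum hone
      _ = 𝒞.card * (q ^ (d-1) - 1) := by rw [Finset.sum_const, smul_eq_mul]
  have hkey : bad.card < bigA.card := by
    have e1 : 𝒞.card * (q ^ (d-1) - 1) ≤ q * (q ^ (d-1) - 1) :=
      Nat.mul_le_mul_right _ hcard
    have e2 : q ^ d = q * q ^ (d-1) := by
      conv_lhs => rw [show d = 1 + (d - 1) by omega]
      rw [pow_add, pow_one]
    have e3 : 1 ≤ q ^ (d-1) := Nat.one_le_pow _ _ (by omega)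
    have e4 : q * (q ^ (d-1) - 1) = q * q ^ (d-1) - q := by
      rw [Nat.mul_sub, mul_one]
    have e5 : q ≤ q * q ^ (d-1) := Nat.le_mul_of_pos_right q (by omega)
    omega
  have hns : ¬ bigA ⊆ bad := fun h => absurd (Finset.card_le_card h) (by omega)
  obtain ⟨y, hy1, hy2⟩ := Finset.not_subset.mp hns
  rw [hbigAdef, Finset.mem_erase, Set.mem_toFinset] at hy1
  refine ⟨y, hy1.2, hy1.1, fun P hPm hyP => hy2 ?_⟩
  rw [hbaddef]
  refine Finset.mem_biUnion.mpr ⟨P, hPm, ?_⟩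
  rw [Finset.mem_erase, Set.mem_toFinset]
  exact ⟨hy1.1, hy1.2, hyP⟩

/-- The submodule of vectors supported inside `S`. -/
def suppSub (S : Finset (Fin n)) : Submodule F (Fin n → F) where
  carrier := {v | ∀ i ∉ S, v i = 0}
  zero_mem' := fun i _ => rfl
  add_mem' := fun ha hb i hi => by simp only [Pi.add_apply, ha i hi, hb i hi, add_zero]
  smul_mem' := fun c a ha i hi => by simp only [Pi.smul_apply, ha i hi, smul_eq_mul, mul_zero]

lemma mem_suppSub {S : Finset (Fin n)} {v : Fin n → F} :
    v ∈ (suppSub S : Submodule F (Fin n → F)) ↔ ∀ i ∉ S, v i = 0 := Iff.rfl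

lemma finrank_suppSub_le (S : Finset (Fin n)) :
    Module.finrank F (suppSub S : Submodule F (Fin n → F)) ≤ S.card := by
  classical
  have hle : (suppSub S : Submodule F (Fin n → F)) ≤
      Submodule.span F ((S.image (fun i => (Pi.single i 1 : Fin n → F))) : Set (Fin n → F)) := by
    intro v hv
    have hv' : v = ∑ i ∈ S, v i • (Pi.single i 1 : Fin n → F) := by
      funext j
      rw [Finset.sum_apply]
      by_cases hj : j ∈ S
      · rw [Finset.sum_eq_single j]
        · simp
        · intro i _ hij
          simp [Pi.single_apply, hij]
        · intro h; exact absurd hj h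
      · rw [hv j hj]
        refine (Finset.sum_eq_zero ?_).symm
        intro i hi
        have hij : i ≠ j := fun h => hj (h ▸ hi)
        simp [Pi.single_apply, hij]
    rw [hv']
    exact Submodule.sum_mem _ fun i hi => Submodule.smul_mem _ _
      (Submodule.subset_span (Finset.mem_coe.mpr (Finset.mem_image_of_mem _ hi)))
  calc Module.finrank F (suppSub S : Submodule F (Fin n → F))
      ≤ Module.finrank F (Submodule.span F ((S.image (fun i => (Pi.single i 1 : Fin n → F))) : Set (Fin n → F))) :=
        Submodule.finrank_mono hle
    _ ≤ (S.image (fun i => (Pi.single i 1 : Fin n → F))).card := by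
        exact finrank_span_finset_le_card _
    _ ≤ S.card := Finset.card_image_le

lemma hammingNorm_le_of_mem_suppSub {S : Finset (Fin n)} {v : Fin n → F}
    (hv : v ∈ (suppSub S : Submodule F (Fin n → F))) : hammingNorm v ≤ S.card := by
  classical
  refine Finset.card_le_card ?_
  intro i hi
  rw [Finset.mem_filter] at hi
  by_contra h
  exact hi.2 (hv i h)

lemma exists_suppSub_of_hammingNorm_le {v : Fin n → F} {s : ℕ} (hs : s ≤ n)
    (h : hammingNorm v ≤ s) :
    ∃ S : Finset (Fin n), S.card = s ∧ v ∈ (suppSub S : Submodule F (Fin n → F)) := by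
  classical
  obtain ⟨S, hsub, -, hcard⟩ := Finset.exists_subsuperset_card_eq
    (Finset.subset_univ (Finset.univ.filter (fun i => v i ≠ 0)))
    (by simpa [hammingNorm] using h) (by simpa using hs)
  refine ⟨S, hcard, fun i hi => ?_⟩
  by_contra h0
  exact hi (hsub (by simp [h0]))

lemma exists_between {W D : Submodule F (Fin n → F)} (hWD : W ≤ D) (r : ℕ)
    (h1 : Module.finrank F W ≤ r) (h2 : r ≤ Module.finrank F D) :
    ∃ E, W ≤ E ∧ E ≤ D ∧ Module.finrank F E = r := by
  classical
  obtain ⟨d, hd⟩ : ∃ d, r = Module.finrank F W + d := ⟨r - Module.finrank F W, by omega⟩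
  subst hd
  clear h1
  induction d generalizing W with
  | zero => exact ⟨W, le_refl W, hWD, rfl⟩
  | succ d ih =>
    have hne : W ≠ D := by
      intro h
      rw [h] at h2
      omega
    obtain ⟨x, hxD, hxW⟩ : ∃ x, x ∈ D ∧ x ∉ W := by
      by_contra h
      push_neg at h
      exact hne (le_antisymm hWD h)
    have hx0 : x ≠ 0 := fun h => hxW (h ▸ W.zero_mem)
    have hinf : W ⊓ Submodule.span F {x} = ⊥ := by
      rw [eq_bot_iff]
      intro z hz
      rw [Submodule.mem_inf] at hz
      obtain ⟨hz1, hz2⟩ := hz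
      rw [Submodule.mem_span_singleton] at hz2
      obtain ⟨c, rfl⟩ := hz2
      rcases eq_or_ne c 0 with rfl | hc
      · simp
      · refine absurd ?_ hxW
        have h' := W.smul_mem c⁻¹ hz1
        rwa [smul_smul, inv_mul_cancel₀ hc, one_smul] at h'
    have hsup : Module.finrank F (W ⊔ Submodule.span F {x} : Submodule F (Fin n → F))
        = Module.finrank F W + 1 := by
      have := Submodule.finrank_sup_add_finrank_inf_eq W (Submodule.span F {x})
      rw [hinf, finrank_bot, finrank_span_singleton hx0] at this
      omega
    have hWD' : W ⊔ Submodule.span F {x} ≤ D :=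
      sup_le hWD ((Submodule.span_singleton_le_iff_mem _ _).mpr hxD)
    obtain ⟨E, hE1, hE2, hE3⟩ := ih hWD' (by omega)
    · exact ⟨E, le_trans le_sup_left hE1, hE2, by omega⟩

lemma exists_good_hyperplane (hq : Nat.choose n t < Fintype.card F) (htk : t < k) (hkn : k < n)
    {X : Submodule F (Fin n → F)} (hX : goodCode F n t k X) :
    ∃ D, D ≤ X ∧ goodCode F n t (k-1) D := by
  classical
  have htn : t ≤ n := by omega
  have hfr : Module.finrank F (⊤ : Submodule F (Fin n → F)) = n := by
    rw [finrank_top, finrank_pi]; simp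
  have hdX := finrank_dualCode_add X
  rw [hX.1] at hdX
  set 𝒞 : Finset (Submodule F (Fin n → F)) :=
    (Finset.powersetCard t (Finset.univ : Finset (Fin n))).image
      (fun S => dualCode F n X ⊔ suppSub S) with h𝒞
  have hproper : ∀ P ∈ 𝒞, ¬ (⊤ : Submodule F (Fin n → F)) ≤ P := by
    intro P hPm
    rw [h𝒞, Finset.mem_image] at hPm
    obtain ⟨S, hS, rfl⟩ := hPm
    rw [Finset.mem_powersetCard] at hS
    intro htop
    rw [top_le_iff] at htop
    have h2 := Submodule.finrank_sup_add_finrank_inf_eq (dualCode F n X) (suppSub S)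
    have h3 := finrank_suppSub_le (F:=F) S
    rw [hS.2] at h3
    rw [htop, hfr] at h2
    omega
  have hcard𝒞 : 𝒞.card ≤ Fintype.card F := by
    calc 𝒞.card ≤ (Finset.powersetCard t (Finset.univ : Finset (Fin n))).card :=
        Finset.card_image_le
      _ = Nat.choose n t := by rw [Finset.card_powersetCard]; simp
      _ ≤ Fintype.card F := by omega
  have htopbot : (⊤ : Submodule F (Fin n → F)) ≠ ⊥ := by
    intro h
    rw [h, finrank_bot] at hfr
    omega
  obtain ⟨w, -, hw0, hwav⟩ := exists_avoid ⊤ htopbot 𝒞 hproper hcard𝒞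
  have hSex : ∃ S : Finset (Fin n), S ∈ Finset.powersetCard t (Finset.univ : Finset (Fin n)) := by
    have : 0 < (Finset.powersetCard t (Finset.univ : Finset (Fin n))).card := by
      rw [Finset.card_powersetCard]
      simpa using Nat.choose_pos htn
    obtain ⟨S, hS⟩ := Finset.card_pos.mp this
    exact ⟨S, hS⟩
  have hwX : w ∉ dualCode F n X := by
    intro hw
    obtain ⟨S, hS⟩ := hSex
    exact hwav _ (Finset.mem_image_of_mem _ hS)
      (Submodule.mem_sup_left (T := suppSub S) hw)
  set D := X ⊓ LinearMap.ker (dotL w) with hDdef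
  have hDX : D ≤ X := inf_le_left
  set f : X →ₗ[F] F := (dotL w).comp X.subtype with hf
  have hker : LinearMap.ker f = Submodule.comap X.subtype D := by
    rw [hf, LinearMap.ker_comp, hDdef, Submodule.comap_inf, Submodule.comap_subtype_self,
      top_inf_eq]
  have hfne : f ≠ 0 := by
    rw [mem_dualCode] at hwX
    push_neg at hwX
    obtain ⟨c, hc1, hc2⟩ := hwX
    intro h
    apply hc2
    have h0 : f ⟨c, hc1⟩ = 0 := by rw [h]; rfl
    exact h0
  have hrange : Module.finrank F (LinearMap.range f) = 1 := by
    have hle : Module.finrank F (LinearMap.range f) ≤ 1 := by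
      have h := Submodule.finrank_le (LinearMap.range f)
      rwa [finrank_self] at h
    have hne : LinearMap.range f ≠ ⊥ := fun h => hfne (LinearMap.range_eq_bot.mp h)
    have hpos : 0 < Module.finrank F (LinearMap.range f) := by
      by_contra h
      push_neg at h
      exact hne (Submodule.finrank_eq_zero.mp (by omega))
    omega
  have hrankD : Module.finrank F D = k - 1 := by
    have h1 := LinearMap.finrank_range_add_finrank_ker f
    rw [hrange, hX.1] at h1
    have h2 : Module.finrank F (LinearMap.ker f) = Module.finrank F D := by
      rw [hker]
      exact LinearEquiv.finrank_eq (Submodule.comapSubtypeEquivOfLe hDX)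
    omega
  have hwD : w ∈ dualCode F n D := by
    rw [mem_dualCode]
    intro c hc
    exact LinearMap.mem_ker.mp (Submodule.mem_inf.mp hc).2
  have hdD := finrank_dualCode_add D
  rw [hrankD] at hdD
  have hinf : dualCode F n X ⊓ Submodule.span F {w} = ⊥ := by
    rw [eq_bot_iff]
    intro z hz
    rw [Submodule.mem_inf] at hz
    obtain ⟨hz1, hz2⟩ := hz
    rw [Submodule.mem_span_singleton] at hz2
    obtain ⟨c, rfl⟩ := hz2
    rcases eq_or_ne c 0 with rfl | hc
    · simp
    · exfalso
      apply hwX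
      have h' := (dualCode F n X).smul_mem c⁻¹ hz1
      rwa [smul_smul, inv_mul_cancel₀ hc, one_smul] at h'
  have hsupfin : Module.finrank F (dualCode F n X ⊔ Submodule.span F {w} :
      Submodule F (Fin n → F)) = n - k + 1 := by
    have h := Submodule.finrank_sup_add_finrank_inf_eq (dualCode F n X) (Submodule.span F {w})
    rw [hinf, finrank_bot, finrank_span_singleton hw0] at h
    omega
  have hdual : dualCode F n D = dualCode F n X ⊔ Submodule.span F {w} := by
    refine (Submodule.eq_of_le_of_finrank_le
      (sup_le (dualCode_antitone hDX)
        ((Submodule.span_singleton_le_iff_mem _ _).mpr hwD)) ?_).symm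
    rw [hsupfin]
    omega
  refine ⟨D, hDX, hrankD, ?_⟩
  intro v hv hv0
  by_contra hcon
  push_neg at hcon
  obtain ⟨S, hScard, hvS⟩ := exists_suppSub_of_hammingNorm_le (v := v) htn (by omega)
  rw [hdual] at hv
  obtain ⟨u, hu, z, hz, huz⟩ := Submodule.mem_sup.mp hv
  rw [Submodule.mem_span_singleton] at hz
  obtain ⟨c, rfl⟩ := hz
  rcases eq_or_ne c 0 with rfl | hc
  · rw [zero_smul, add_zero] at huz
    subst huz
    exact absurd (hX.2 u hu hv0) (by omega)
  · have hP : dualCode F n X ⊔ suppSub S ∈ 𝒞 := by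
      refine Finset.mem_image_of_mem _ ?_
      rw [Finset.mem_powersetCard]
      exact ⟨Finset.subset_univ S, hScard⟩
    refine hwav _ hP ?_
    have hvP : v ∈ dualCode F n X ⊔ suppSub S :=
      Submodule.mem_sup_right hvS
    have huP : u ∈ dualCode F n X ⊔ suppSub S := Submodule.mem_sup_left hu
    have hcw : c • w = v - u := by rw [← huz, add_sub_cancel_left]
    have hsub : c • w ∈ dualCode F n X ⊔ suppSub S := by
      rw [hcw]; exact Submodule.sub_mem _ hvP huP
    have h' := Submodule.smul_mem (dualCode F n X ⊔ suppSub S) c⁻¹ hsub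
    rwa [smul_smul, inv_mul_cancel₀ hc, one_smul] at h'

lemma dot_comm (a b : Fin n → F) : (∑ i, a i * b i) = ∑ i, b i * a i :=
  Finset.sum_congr rfl fun i _ => mul_comm _ _

lemma inf_span_singleton_eq_bot {U : Submodule F (Fin n → F)} {x : Fin n → F} (hx : x ∉ U) :
    U ⊓ Submodule.span F {x} = ⊥ := by
  rw [eq_bot_iff]
  intro z hz
  rw [Submodule.mem_inf] at hz
  obtain ⟨hz1, hz2⟩ := hz
  rw [Submodule.mem_span_singleton] at hz2
  obtain ⟨c, rfl⟩ := hz2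
  rcases eq_or_ne c 0 with rfl | hc
  · simp
  · exfalso
    apply hx
    have h' := U.smul_mem c⁻¹ hz1
    rwa [smul_smul, inv_mul_cancel₀ hc, one_smul] at h'

lemma finrank_sup_span_singleton {U : Submodule F (Fin n → F)} {x : Fin n → F} (hx : x ∉ U) :
    Module.finrank F (U ⊔ Submodule.span F {x} : Submodule F (Fin n → F))
      = Module.finrank F U + 1 := by
  have hx0 : x ≠ 0 := fun h => hx (h ▸ U.zero_mem)
  have h := Submodule.finrank_sup_add_finrank_inf_eq U (Submodule.span F {x})
  rw [inf_span_singleton_eq_bot hx, finrank_bot, finrank_span_singleton hx0] at h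
  omega

lemma step_lemma (hq : Nat.choose n t < Fintype.card F) (htn : t ≤ n) {K : ℕ}
    {D D' : Submodule F (Fin n → F)} (hD : goodCode F n t K D) (hD' : goodCode F n t K D')
    (hne : D ≠ D') :
    ∃ D'', goodCode F n t K D'' ∧
      Module.finrank F (D ⊓ D'' : Submodule F (Fin n → F)) = K - 1 ∧
      Module.finrank F (D ⊓ D' : Submodule F (Fin n → F)) <
        Module.finrank F (D'' ⊓ D' : Submodule F (Fin n → F)) := by
  classical
  have hM : Module.finrank F (Fin n → F) = n := by rw [finrank_pi]; simp
  have hKn : K ≤ n := by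
    have h := Submodule.finrank_le D
    rw [hD.1, hM] at h
    exact h
  have hK1 : 1 ≤ K := by
    by_contra h
    push_neg at h
    have h0 : K = 0 := by omega
    apply hne
    rw [Submodule.finrank_eq_zero.mp (hD.1.trans h0),
      Submodule.finrank_eq_zero.mp (hD'.1.trans h0)]
  have hWfr : Module.finrank F (D ⊓ D' : Submodule F (Fin n → F)) < K := by
    have hle : Module.finrank F (D ⊓ D' : Submodule F (Fin n → F)) ≤ K := by
      have h := Submodule.finrank_mono (inf_le_left : D ⊓ D' ≤ D)
      rwa [hD.1] at h
    rcases lt_or_eq_of_le hle with h | h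
    · exact h
    · exfalso
      have h1 : D ⊓ D' = D :=
        Submodule.eq_of_le_of_finrank_le inf_le_left (by rw [hD.1, h])
      have hDD' : D ≤ D' := by rw [← h1]; exact inf_le_right
      exact hne (Submodule.eq_of_le_of_finrank_le hDD' (by rw [hD.1, hD'.1]))
  obtain ⟨E, hWE, hED, hEfr⟩ := exists_between (inf_le_left : D ⊓ D' ≤ D) (K-1)
    (by omega) (by rw [hD.1]; omega)
  have hdE := finrank_dualCode_add E
  have hdD := finrank_dualCode_add D
  rw [hEfr] at hdE
  rw [hD.1] at hdD
  have hWS1 : ∀ S : Finset (Fin n), S.card = t →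
      Module.finrank F (dualCode F n E ⊓ suppSub S : Submodule F (Fin n → F)) ≤ 1 := by
    intro S hScard
    have hint : (dualCode F n E ⊓ suppSub S) ⊓ dualCode F n D = ⊥ := by
      rw [eq_bot_iff]
      intro z hz
      rw [Submodule.mem_inf, Submodule.mem_inf] at hz
      rcases eq_or_ne z 0 with rfl | hz0
      · simp
      · exfalso
        have h1 := hD.2 z hz.2 hz0
        have h2 := hammingNorm_le_of_mem_suppSub hz.1.2
        rw [hScard] at h2
        omega
    have hsub : (dualCode F n E ⊓ suppSub S) ⊔ dualCode F n D ≤ dualCode F n E :=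
      sup_le inf_le_left (dualCode_antitone hED)
    have h := Submodule.finrank_sup_add_finrank_inf_eq
      (dualCode F n E ⊓ suppSub S) (dualCode F n D)
    rw [hint, finrank_bot] at h
    have h2 := Submodule.finrank_mono hsub
    omega
  set 𝒞 : Finset (Submodule F (Fin n → F)) :=
    insert E (((Finset.powersetCard t (Finset.univ : Finset (Fin n))).image
      (fun S => dualCode F n (dualCode F n E ⊓ suppSub S))).erase ⊤) with h𝒞
  have hproper : ∀ P ∈ 𝒞, ¬ D' ≤ P := by
    intro P hPm
    rcases Finset.mem_insert.mp hPm with rfl | hPm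
    · intro hle
      have h := Submodule.finrank_mono hle
      rw [hD'.1, hEfr] at h
      omega
    · obtain ⟨hPne, hPim⟩ := Finset.mem_erase.mp hPm
      obtain ⟨S, hS, rfl⟩ := Finset.mem_image.mp hPim
      rw [Finset.mem_powersetCard] at hS
      have hWSbot : dualCode F n E ⊓ suppSub S ≠ ⊥ := by
        intro h
        apply hPne
        rw [h, eq_top_iff]
        intro z _
        rw [mem_dualCode]
        intro c hc
        obtain rfl : c = 0 := by simpa using hc
        simp
      obtain ⟨v, hv, hv0⟩ := (Submodule.ne_bot_iff _).mp hWSbot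
      intro hle
      have hvD' : v ∈ dualCode F n D' := by
        rw [mem_dualCode]
        intro c hc
        have h1 := hle hc
        rw [mem_dualCode] at h1
        rw [dot_comm]
        exact h1 v hv
      have hwt := hD'.2 v hvD' hv0
      have h2 := hammingNorm_le_of_mem_suppSub (Submodule.mem_inf.mp hv).2
      rw [hS.2] at h2
      omega
  have hcard𝒞 : 𝒞.card ≤ Fintype.card F := by
    have h1 : 𝒞.card ≤ (((Finset.powersetCard t (Finset.univ : Finset (Fin n))).image
        (fun S => dualCode F n (dualCode F n E ⊓ suppSub S))).erase ⊤).card + 1 :=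
      Finset.card_insert_le _ _
    have h2 : (((Finset.powersetCard t (Finset.univ : Finset (Fin n))).image
        (fun S => dualCode F n (dualCode F n E ⊓ suppSub S))).erase ⊤).card
        ≤ Nat.choose n t := by
      calc _ ≤ ((Finset.powersetCard t (Finset.univ : Finset (Fin n))).image
            (fun S => dualCode F n (dualCode F n E ⊓ suppSub S))).card :=
          Finset.card_erase_le
        _ ≤ (Finset.powersetCard t (Finset.univ : Finset (Fin n))).card :=
          Finset.card_image_le
        _ = Nat.choose n t := by rw [Finset.card_powersetCard]; simp
    omega
  have hD'bot : D' ≠ ⊥ := by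
    intro h
    have h1 := hD'.1
    rw [h, finrank_bot] at h1
    omega
  obtain ⟨y, hyD', hy0, hyav⟩ := exists_avoid D' hD'bot 𝒞 hproper hcard𝒞
  have hyE : y ∉ E := hyav E (Finset.mem_insert_self _ _)
  have hyD : y ∉ D := by
    intro h
    exact hyE (hWE (Submodule.mem_inf.mpr ⟨h, hyD'⟩))
  set D'' := E ⊔ Submodule.span F {y} with hD''def
  have hyD'' : y ∈ D'' := Submodule.mem_sup_right (Submodule.mem_span_singleton_self y)
  have hfrD'' : Module.finrank F D'' = K := by
    rw [hD''def, finrank_sup_span_singleton hyE, hEfr]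
    omega
  have hED'' : E ≤ D'' := le_sup_left
  have hgood : goodCode F n t K D'' := by
    refine ⟨hfrD'', ?_⟩
    intro v hv hv0
    by_contra hcon
    push_neg at hcon
    obtain ⟨S, hScard, hvS⟩ := exists_suppSub_of_hammingNorm_le (v := v) htn (by omega)
    have hvE : v ∈ dualCode F n E := dualCode_antitone hED'' hv
    have hvWS : v ∈ dualCode F n E ⊓ suppSub S := Submodule.mem_inf.mpr ⟨hvE, hvS⟩
    have hWSeq : dualCode F n E ⊓ suppSub S = Submodule.span F {v} :=
      (Submodule.eq_of_le_of_finrank_le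
        ((Submodule.span_singleton_le_iff_mem _ _).mpr hvWS)
        (by rw [finrank_span_singleton hv0]; exact hWS1 S hScard)).symm
    set P := dualCode F n (dualCode F n E ⊓ suppSub S) with hPdef
    have hyP : y ∈ P := by
      rw [hPdef, mem_dualCode]
      intro c hc
      rw [hWSeq, Submodule.mem_span_singleton] at hc
      obtain ⟨a, rfl⟩ := hc
      have h0 : (∑ i, v i * y i) = 0 := by
        rw [mem_dualCode] at hv
        exact hv y hyD''
      calc (∑ i, y i * (a • v) i) = a * ∑ i, v i * y i := by
            rw [Finset.mul_sum]
            refine Finset.sum_congr rfl fun i _ => ?_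
            simp [smul_eq_mul]
            ring
        _ = 0 := by rw [h0, mul_zero]
    have hPne : P ≠ ⊤ := by
      obtain ⟨j, hj⟩ := Function.ne_iff.mp hv0
      intro h
      have hsing : (Pi.single j 1 : Fin n → F) ∈ P := h ▸ Submodule.mem_top
      rw [hPdef, mem_dualCode] at hsing
      have h1 := hsing v hvWS
      rw [Finset.sum_eq_single j] at h1
      · rw [Pi.single_eq_same, one_mul] at h1
        exact hj (by simpa using h1)
      · intro i _ hij
        rw [Pi.single_eq_of_ne hij, zero_mul]
      · intro h2
        exact absurd (Finset.mem_univ j) h2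
    have hPm : P ∈ 𝒞 := by
      rw [h𝒞]
      refine Finset.mem_insert_of_mem (Finset.mem_erase.mpr ⟨hPne, ?_⟩)
      refine Finset.mem_image_of_mem _ ?_
      rw [Finset.mem_powersetCard]
      exact ⟨Finset.subset_univ S, hScard⟩
    exact hyav P hPm hyP
  refine ⟨D'', hgood, ?_, ?_⟩
  · have hle1 : E ≤ D ⊓ D'' := le_inf hED hED''
    have h1 : K - 1 ≤ Module.finrank F (D ⊓ D'' : Submodule F (Fin n → F)) := by
      have h := Submodule.finrank_mono hle1
      rwa [hEfr] at h
    have h2 : Module.finrank F (D ⊓ D'' : Submodule F (Fin n → F)) ≤ K := by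
      have h := Submodule.finrank_mono (inf_le_right : D ⊓ D'' ≤ D'')
      rwa [hfrD''] at h
    have h3 : Module.finrank F (D ⊓ D'' : Submodule F (Fin n → F)) ≠ K := by
      intro h
      have h4 : D ⊓ D'' = D'' :=
        Submodule.eq_of_le_of_finrank_le inf_le_right (by rw [hfrD'', h])
      apply hyD
      have h5 : D'' ≤ D := by rw [← h4]; exact inf_le_left
      exact h5 hyD''
    omega
  · have hle2 : (D ⊓ D') ⊔ Submodule.span F {y} ≤ D'' ⊓ D' := by
      refine sup_le (le_inf (le_trans hWE hED'') inf_le_right) ?_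
      rw [Submodule.span_singleton_le_iff_mem]
      exact Submodule.mem_inf.mpr ⟨hyD'', hyD'⟩
    have hyW : y ∉ D ⊓ D' := fun h => hyE (hWE h)
    have h := Submodule.finrank_mono hle2
    rw [finrank_sup_span_singleton hyW] at h
    omega

lemma reach_of_common {X Y D : Submodule F (Fin n → F)} (hk : 0 < k)
    (hX : goodCode F n t k X) (hY : goodCode F n t k Y) (hD : goodCode F n t (k-1) D)
    (h1 : D ≤ X) (h2 : D ≤ Y) :
    (lambdaGraph F n t k).Reachable ⟨X, hX⟩ ⟨Y, hY⟩ := by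
  by_cases hXY : X = Y
  · subst hXY
    rfl
  · refine SimpleGraph.Adj.reachable ?_
    have hne : (⟨X, hX⟩ : {C : Submodule F (Fin n → F) // goodCode F n t k C}) ≠ ⟨Y, hY⟩ :=
      fun h => hXY (congrArg Subtype.val h)
    refine ⟨hne, ?_⟩
    have hle : D ≤ X ⊓ Y := le_inf h1 h2
    have hfrle : Module.finrank F (X ⊓ Y : Submodule F (Fin n → F)) ≤ k - 1 := by
      have hfr1 : Module.finrank F (X ⊓ Y : Submodule F (Fin n → F)) ≤ k := by
        have h := Submodule.finrank_mono (inf_le_left : X ⊓ Y ≤ X)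
        rwa [hX.1] at h
      have hne2 : Module.finrank F (X ⊓ Y : Submodule F (Fin n → F)) ≠ k := by
        intro h
        have e1 : X ⊓ Y = X :=
          Submodule.eq_of_le_of_finrank_le inf_le_left (by rw [hX.1, h])
        have e2 : X ⊓ Y = Y :=
          Submodule.eq_of_le_of_finrank_le inf_le_right (by rw [hY.1, h])
        exact hXY (e1.symm.trans e2)
      omega
    have heq : D = X ⊓ Y :=
      Submodule.eq_of_le_of_finrank_le hle (by rw [hD.1]; omega)
    rw [← heq]
    exact hD

lemma main_reach (hq : Nat.choose n t < Fintype.card F) (hk : 0 < k) (hkn : k < n)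
    (htk : t < k) :
    ∀ d : ℕ, ∀ (X Y D D' : Submodule F (Fin n → F)) (hX : goodCode F n t k X)
      (hY : goodCode F n t k Y), goodCode F n t (k-1) D → goodCode F n t (k-1) D' →
      D ≤ X → D' ≤ Y →
      k - 1 ≤ Module.finrank F (D ⊓ D' : Submodule F (Fin n → F)) + d →
      (lambdaGraph F n t k).Reachable ⟨X, hX⟩ ⟨Y, hY⟩ := by
  intro d
  induction d with
  | zero =>
    intro X Y D D' hX hY hD hD' hDX hD'Y hbound
    have h1 : D ⊓ D' = D :=
      Submodule.eq_of_le_of_finrank_le inf_le_left (by rw [hD.1]; omega)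
    have hDD' : D ≤ D' := by rw [← h1]; exact inf_le_right
    have h2 : D = D' := Submodule.eq_of_le_of_finrank_le hDD' (by rw [hD.1, hD'.1])
    exact reach_of_common hk hX hY hD hDX (h2 ▸ hD'Y)
  | succ d ih =>
    intro X Y D D' hX hY hD hD' hDX hD'Y hbound
    by_cases hDD' : D = D'
    · exact reach_of_common hk hX hY hD hDX (hDD' ▸ hD'Y)
    · have hK1 : 1 ≤ k - 1 := by
        by_contra h
        push_neg at h
        apply hDD'
        rw [Submodule.finrank_eq_zero.mp (hD.1.trans (by omega)),
          Submodule.finrank_eq_zero.mp (hD'.1.trans (by omega))]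
      obtain ⟨D'', hD''good, hfr1, hfr2⟩ := step_lemma hq (by omega) hD hD' hDD'
      have hfrD'' : Module.finrank F D'' = k - 1 := hD''good.1
      have hinfZ := Submodule.finrank_sup_add_finrank_inf_eq D D''
      rw [hD.1, hfrD'', hfr1] at hinfZ
      have hZfr : Module.finrank F (D ⊔ D'' : Submodule F (Fin n → F)) = k := by omega
      have hZgood : goodCode F n t k (D ⊔ D'') := good_up hD le_sup_left hZfr
      exact (reach_of_common hk hX hZgood hD hDX le_sup_left).trans
        (ih _ _ D'' D' hZgood hY hD''good hD' le_sup_right hD'Y (by omega))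

end LambdaAux

/-- If `q > binomial(n,t)` and `t < k`, then `Λ_t(n,k)` is connected. -/
theorem lambda_connected_of_large_q
    {n k t : ℕ} (hk : 0 < k) (hkn : k < n) (htk : t < k)
    (hq : Nat.choose n t < Fintype.card F) :
    (lambdaGraph F n t k).Preconnected := by
  intro u v
  obtain ⟨X, hX⟩ := u
  obtain ⟨Y, hY⟩ := v
  obtain ⟨D, hDX, hD⟩ := LambdaAux.exists_good_hyperplane hq htk hkn hX
  obtain ⟨D', hD'Y, hD'⟩ := LambdaAux.exists_good_hyperplane hq htk hkn hY
  exact LambdaAux.main_reach hq hk hkn htk (k-1) X Y D D' hX hY hD hD' hDX hD'Y (by omega)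
end
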